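/- arXiv:2603.17365 — 2 statements merged into one kernel-verified Lean document; each statement's English description precedes it below -/
import Mathlib

section
/- Let ψ ~ N(0,C) with C = β⁻¹G_U be the discrete Gaussian free field on the grid U, let h:U→(0,∞), and let h̃ = ξ^sw_γ ⊙ h with the sample-wise gate. Then the expected intrinsic energy satisfies exactly 𝔼[𝓔_int(log h̃)] = 𝓔_int(log h) + γ²·ε_int, where ε_int = 𝔼[𝓔_int(ψ)] = (1/2)·Tr(L_int C). -/
open MeasureTheory Matrix Real

noncomputable section
/-- A point of the `H × W` feature grid `U = {1,…,H} × {1,…,W}` (0-indexed model). -/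
abbrev GridPt (H W : ℕ) := Fin H × Fin W

/-- Embedding of the grid into `ℤ × ℤ` with coordinates in `{1,…,H} × {1,…,W}`. -/
def gridZ {H W : ℕ} (x : GridPt H W) : ℤ × ℤ := ((x.1 : ℤ) + 1, (x.2 : ℤ) + 1)

/-- Nearest-neighbor adjacency on `ℤ × ℤ`: `ℓ¹`-distance one. -/
def adjZ (p q : ℤ × ℤ) : Bool := |p.1 - q.1| + |p.2 - q.2| == 1

/-- The Dirichlet Laplacian matrix on the grid `U` with edge weights `c` and zero
(auxiliary Dirichlet) boundary: `(L_U φ)(x) = ∑_{y : {x,y} ∈ E} c_{xy} (φ(x) − φ̄(y))`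
where `φ̄` extends `φ` by zero outside `U`. -/
def dirichletLap (H W : ℕ) (c : ℤ × ℤ → ℤ × ℤ → ℝ) :
    Matrix (GridPt H W) (GridPt H W) ℝ := fun x y =>
  if x = y then
    ((([((1 : ℤ), (0 : ℤ)), (-1, 0), (0, 1), (0, -1)] : List (ℤ × ℤ)).map
      (fun d => c (gridZ x) (gridZ x + d))).sum)
  else if adjZ (gridZ x) (gridZ y) then -c (gridZ x) (gridZ y) else 0
/-- Intrinsic energy `𝓔_int(f) = (1/2) ∑_{{x,y} ∈ E_int} c_{xy} (f(x) − f(y))²`,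
written as `1/4` times the sum over ordered adjacent pairs in `U`. -/
def Eint {H W : ℕ} (c : ℤ × ℤ → ℤ × ℤ → ℝ) (f : GridPt H W → ℝ) : ℝ :=
  (1 / 4) * ∑ x : GridPt H W, ∑ y : GridPt H W,
    if adjZ (gridZ x) (gridZ y) then c (gridZ x) (gridZ y) * (f x - f y) ^ 2 else 0

/-- Intrinsic weighted degree `d_x^int = ∑_{y : {x,y} ∈ E_int} c_{xy}`. -/
def dInt {H W : ℕ} (c : ℤ × ℤ → ℤ × ℤ → ℝ) (x : GridPt H W) : ℝ :=
  ∑ y : GridPt H W, if adjZ (gridZ x) (gridZ y) then c (gridZ x) (gridZ y) else 0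

/-- Interior (intrinsic) graph Laplacian `L_int` on `U`, with no boundary term. -/
def Lint (H W : ℕ) (c : ℤ × ℤ → ℤ × ℤ → ℝ) :
    Matrix (GridPt H W) (GridPt H W) ℝ := fun x y =>
  if x = y then dInt c x
  else if adjZ (gridZ x) (gridZ y) then -c (gridZ x) (gridZ y) else 0
/-- `ψ` is a centered Gaussian random vector with covariance matrix `C` under `P`:
every linear functional of `ψ` is a centered real Gaussian with the induced variance. -/
def IsCenteredGaussianField {ι : Type*} [Fintype ι] {Ω : Type*} [MeasurableSpace Ω]
    (P : MeasureTheory.Measure Ω) (ψ : Ω → ι → ℝ) (C : Matrix ι ι ℝ) : Prop :=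
  ∀ a : ι → ℝ,
    MeasureTheory.Measure.map (fun ω => ∑ x, a x * ψ ω x) P =
      ProbabilityTheory.gaussianReal 0 (∑ x, ∑ y, a x * C x y * a y).toNNReal

/-- Sample-wise mean-one gate `ξ^sw_γ(x) = exp(γψ(x)) / ((1/|U|) ∑_y exp(γψ(y)))`. -/
def swGate {ι : Type*} [Fintype ι] (γ : ℝ) (ψ : ι → ℝ) (x : ι) : ℝ :=
  Real.exp (γ * ψ x) / ((∑ y : ι, Real.exp (γ * ψ y)) / (Fintype.card ι : ℝ))


section AuxGauss
open ProbabilityTheory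
open scoped NNReal ENNReal

-- even/odd integral helpers
lemma my_integral_even {f : ℝ → ℝ} (hf : Integrable f) (he : ∀ x, f (-x) = f x) :
    ∫ x, f x = 2 * ∫ x in Set.Ioi (0:ℝ), f x := by
  have h1 : (∫ x in Set.Iic (0:ℝ), f x) + ∫ x in Set.Ioi (0:ℝ), f x = ∫ x, f x :=
    intervalIntegral.integral_Iic_add_Ioi hf.integrableOn hf.integrableOn
  have h2 : (∫ x in Set.Iic (0:ℝ), f x) = ∫ x in Set.Ioi (0:ℝ), f x := by
    rw [← neg_zero, ← integral_comp_neg_Iic]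
    simp_rw [he]
    rw [neg_zero]
  linarith

lemma my_integral_odd {f : ℝ → ℝ} (ho : ∀ x, f (-x) = - f x) :
    ∫ x, f x = 0 := by
  have : ∫ x, f x = ∫ x, f (-x) := (integral_neg_eq_self f volume).symm
  simp_rw [ho, integral_neg] at this
  linarith

lemma integral_sq_exp_neg_mul_sq {b : ℝ} (hb : 0 < b) :
    ∫ x : ℝ, x ^ 2 * rexp (-b * x ^ 2) = √π / (2 * b * √b) := by
  have hint : Integrable (fun x : ℝ => x ^ 2 * rexp (-b * x ^ 2)) := by
    have := integrable_rpow_mul_exp_neg_mul_sq hb (s := 2) (by norm_num)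
    have h2 : (fun x : ℝ => x ^ (2:ℝ) * rexp (-b * x ^ 2)) = fun x : ℝ => x ^ 2 * rexp (-b * x ^ 2) := by
      funext x; rw [show ((2:ℝ)) = ((2:ℕ):ℝ) by norm_num, Real.rpow_natCast]
    rwa [h2] at this
  rw [my_integral_even hint (by intro x; ring_nf)]
  have h2 : ∫ x in Set.Ioi (0:ℝ), x ^ 2 * rexp (-b * x ^ 2)
      = b ^ (-(3:ℝ)/2) * (1/2) * Real.Gamma ((3:ℝ)/2) := by
    have := integral_rpow_mul_exp_neg_mul_rpow (p := 2) (q := 2) (b := b)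
      (by norm_num) (by norm_num) hb
    rw [show (-((2:ℝ)+1)/2) = (-(3:ℝ)/2) by norm_num, show (((2:ℝ)+1)/2) = ((3:ℝ)/2) by norm_num] at this
    rw [← this]
    refine setIntegral_congr_fun measurableSet_Ioi (fun x hx => ?_)
    rw [← Real.rpow_natCast x 2]
    norm_num
  rw [h2]
  have hg : Real.Gamma ((3:ℝ)/2) = √π / 2 := by
    have : ((3:ℝ)/2) = (1/2) + 1 := by norm_num
    rw [this, Real.Gamma_add_one (by norm_num), Real.Gamma_one_half_eq]
    ring
  rw [hg]
  have hbrw : b ^ (-(3:ℝ)/2) = (b * √b)⁻¹ := by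
    rw [show (-(3:ℝ)/2) = -(1 + 1/2) by norm_num, Real.rpow_neg hb.le,
      Real.rpow_add hb, Real.rpow_one, ← Real.sqrt_eq_rpow]
  rw [hbrw]
  have : √b ≠ 0 := ne_of_gt (Real.sqrt_pos.mpr hb)
  field_simp

lemma my_pdf_eq (v : ℝ≥0) :
    gaussianPDFReal 0 v = fun x => (√(2 * π * v))⁻¹ * rexp (-(2*(v:ℝ))⁻¹ * x ^ 2) := by
  funext x
  rw [gaussianPDFReal]
  rw [show -(x-0)^2/(2*(v:ℝ)) = -(2*(v:ℝ))⁻¹ * x^2 by rw [div_eq_mul_inv]; ring]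

lemma my_integral_gaussianReal (v : ℝ≥0) (hv : v ≠ 0) (g : ℝ → ℝ) :
    ∫ x, g x ∂(gaussianReal 0 v) = ∫ x, gaussianPDFReal 0 v x * g x := by
  rw [gaussianReal_of_var_ne_zero 0 hv]
  have hd : gaussianPDF 0 v = fun x => (((gaussianPDFReal 0 v x).toNNReal : ℝ≥0) : ℝ≥0∞) := rfl
  rw [hd, integral_withDensity_eq_integral_smul
    ((measurable_gaussianPDFReal 0 v).real_toNNReal) g]
  refine integral_congr_ae (Filter.Eventually.of_forall fun x => ?_)
  simp [NNReal.smul_def, Real.coe_toNNReal _ (gaussianPDFReal_nonneg 0 v x)]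

lemma my_integrable_gaussianReal (v : ℝ≥0) (hv : v ≠ 0) (g : ℝ → ℝ) :
    Integrable g (gaussianReal 0 v) ↔ Integrable (fun x => gaussianPDFReal 0 v x * g x) := by
  rw [gaussianReal_of_var_ne_zero 0 hv]
  have hd : gaussianPDF 0 v = fun x => (((gaussianPDFReal 0 v x).toNNReal : ℝ≥0) : ℝ≥0∞) := rfl
  rw [hd, integrable_withDensity_iff_integrable_smul
    ((measurable_gaussianPDFReal 0 v).real_toNNReal)]
  constructor <;> intro hI <;> refine hI.congr (Filter.Eventually.of_forall fun x => ?_) <;>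
    simp [NNReal.smul_def, Real.coe_toNNReal _ (gaussianPDFReal_nonneg 0 v x)]

lemma my_integrable_id_gaussianReal (v : ℝ≥0) :
    Integrable (fun x : ℝ => x) (gaussianReal 0 v) := by
  by_cases hv : v = 0
  · rw [hv, gaussianReal_zero_var]
    exact (integrable_const (0:ℝ)).congr (ae_eq_dirac' measurable_id).symm
  have hb : 0 < (2*(v:ℝ))⁻¹ := by positivity
  rw [my_integrable_gaussianReal v hv]
  have := (integrable_mul_exp_neg_mul_sq hb).const_mul (√(2 * π * (v:ℝ)))⁻¹
  refine this.congr (Filter.Eventually.of_forall fun x => ?_)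
  rw [my_pdf_eq]
  ring

lemma my_integrable_sq_gaussianReal (v : ℝ≥0) :
    Integrable (fun x : ℝ => x ^ 2) (gaussianReal 0 v) := by
  by_cases hv : v = 0
  · rw [hv, gaussianReal_zero_var]
    exact (integrable_const ((0:ℝ)^2)).congr
      (ae_eq_dirac' (measurable_id.pow_const 2)).symm
  have hb : 0 < (2*(v:ℝ))⁻¹ := by positivity
  rw [my_integrable_gaussianReal v hv]
  have h0 : Integrable (fun x : ℝ => x ^ 2 * rexp (-(2*(v:ℝ))⁻¹ * x ^ 2)) := by
    have := integrable_rpow_mul_exp_neg_mul_sq hb (s := 2) (by norm_num)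
    have h2 : (fun x : ℝ => x ^ (2:ℝ) * rexp (-(2*(v:ℝ))⁻¹ * x ^ 2))
        = fun x : ℝ => x ^ 2 * rexp (-(2*(v:ℝ))⁻¹ * x ^ 2) := by
      funext x; rw [show ((2:ℝ)) = ((2:ℕ):ℝ) by norm_num, Real.rpow_natCast]
    rwa [h2] at this
  have := h0.const_mul (√(2 * π * (v:ℝ)))⁻¹
  refine this.congr (Filter.Eventually.of_forall fun x => ?_)
  rw [my_pdf_eq]
  ring

lemma my_integral_id_gaussianReal (v : ℝ≥0) :
    ∫ x, x ∂(gaussianReal 0 v) = 0 := by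
  by_cases hv : v = 0
  · simp [hv]
  rw [my_integral_gaussianReal v hv]
  refine my_integral_odd fun x => ?_
  rw [my_pdf_eq]
  ring_nf

lemma my_integral_sq_gaussianReal (v : ℝ≥0) :
    ∫ x, x ^ 2 ∂(gaussianReal 0 v) = v := by
  by_cases hv : v = 0
  · simp [hv]
  have hb : 0 < (2*(v:ℝ))⁻¹ := by positivity
  have hvpos : 0 < (v:ℝ) := lt_of_le_of_ne v.2 (by exact_mod_cast (Ne.symm hv))
  rw [my_integral_gaussianReal v hv]
  have : ∫ x : ℝ, gaussianPDFReal 0 v x * x ^ 2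
      = (√(2 * π * (v:ℝ)))⁻¹ * ∫ x : ℝ, x ^ 2 * rexp (-(2*(v:ℝ))⁻¹ * x ^ 2) := by
    rw [← integral_const_mul]
    refine integral_congr_ae (Filter.Eventually.of_forall fun x => ?_)
    rw [my_pdf_eq]
    ring
  rw [this, integral_sq_exp_neg_mul_sq hb]
  have hπ : √(2 * π * (v:ℝ)) = √π * √(2*(v:ℝ)) := by
    rw [show 2*π*(v:ℝ) = π*(2*(v:ℝ)) by ring, Real.sqrt_mul pi_pos.le]
  have hbi : √((2*(v:ℝ))⁻¹) = (√(2*(v:ℝ)))⁻¹ := by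
    rw [Real.sqrt_inv]
  rw [hπ, hbi]
  have ht : (0:ℝ) < √(2*(v:ℝ)) := Real.sqrt_pos.mpr (by positivity)
  have ht2 : (√(2*(v:ℝ)))^2 = 2*(v:ℝ) := Real.sq_sqrt (by positivity)
  have hπ2 : (0:ℝ) < √π := Real.sqrt_pos.mpr pi_pos
  field_simp

lemma my_gaussian_map_moments {Ω : Type*} [MeasurableSpace Ω] (P : Measure Ω)
    (T : Ω → ℝ) (hT : Measurable T) (v : ℝ≥0)
    (hmap : Measure.map T P = gaussianReal 0 v) :
    Integrable T P ∧ (∫ ω, T ω ∂P) = 0 ∧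
      Integrable (fun ω => (T ω) ^ 2) P ∧ (∫ ω, (T ω) ^ 2 ∂P) = v := by
  have hTae : AEMeasurable T P := hT.aemeasurable
  have h1 : AEStronglyMeasurable (fun x : ℝ => x) (Measure.map T P) :=
    aestronglyMeasurable_id
  have h2 : AEStronglyMeasurable (fun x : ℝ => x ^ 2) (Measure.map T P) :=
    (measurable_id.pow_const 2).aestronglyMeasurable
  refine ⟨?_, ?_, ?_, ?_⟩
  · have := (integrable_map_measure h1 hTae).mp (by rw [hmap]; exact my_integrable_id_gaussianReal v)
    exact this
  · have := integral_map hTae h1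
    rw [hmap, my_integral_id_gaussianReal] at this
    exact this.symm
  · have := (integrable_map_measure h2 hTae).mp (by rw [hmap]; exact my_integrable_sq_gaussianReal v)
    exact this
  · have := integral_map hTae h2
    rw [hmap, my_integral_sq_gaussianReal] at this
    exact this.symm

end AuxGauss

section AuxGrid

lemma adjZ_symm (p q : ℤ × ℤ) : adjZ p q = adjZ q p := by
  unfold adjZ
  rw [abs_sub_comm p.1 q.1, abs_sub_comm p.2 q.2]

lemma adjZ_self (p : ℤ × ℤ) : adjZ p p = false := by
  unfold adjZ
  simp

lemma adjZ_iff (p q : ℤ × ℤ) : adjZ p q = true ↔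
    (q = p + (1,0) ∨ q = p + (-1,0) ∨ q = p + (0,1) ∨ q = p + (0,-1)) := by
  unfold adjZ
  rw [beq_iff_eq]
  have h1 : p + ((1:ℤ),(0:ℤ)) = (p.1 + 1, p.2) := by simp [Prod.ext_iff]
  have h2 : p + ((-1:ℤ),(0:ℤ)) = (p.1 - 1, p.2) := by simp [Prod.ext_iff]; ring
  have h3 : p + ((0:ℤ),(1:ℤ)) = (p.1, p.2 + 1) := by simp [Prod.ext_iff]
  have h4 : p + ((0:ℤ),(-1:ℤ)) = (p.1, p.2 - 1) := by simp [Prod.ext_iff]; ring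
  rw [h1, h2, h3, h4]
  rw [Prod.ext_iff, Prod.ext_iff, Prod.ext_iff, Prod.ext_iff]
  rcases abs_cases (p.1 - q.1) with ⟨e1, _⟩ | ⟨e1, _⟩ <;>
    rcases abs_cases (p.2 - q.2) with ⟨e2, _⟩ | ⟨e2, _⟩ <;>
    rw [e1, e2] <;> constructor <;> intro hh <;> simp at hh ⊢ <;> omega

lemma gridZ_inj {H W : ℕ} : Function.Injective (gridZ (H := H) (W := W)) := by
  intro a b hab
  unfold gridZ at hab
  rw [Prod.ext_iff] at hab
  obtain ⟨hab1, hab2⟩ := hab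
  have : (a.1 : ℤ) = b.1 := by omega
  have h2 : (a.2 : ℤ) = b.2 := by omega
  ext
  · exact_mod_cast this
  · exact_mod_cast h2

def InU (H W : ℕ) (p : ℤ × ℤ) : Prop :=
  1 ≤ p.1 ∧ p.1 ≤ H ∧ 1 ≤ p.2 ∧ p.2 ≤ W

instance (H W : ℕ) (p : ℤ × ℤ) : Decidable (InU H W p) := by
  unfold InU; infer_instance

lemma exists_gridZ_iff {H W : ℕ} (p : ℤ × ℤ) :
    (∃ y : GridPt H W, gridZ y = p) ↔ InU H W p := by
  constructor
  · rintro ⟨y, rfl⟩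
    unfold InU gridZ
    refine ⟨by omega, ?_, by omega, ?_⟩ <;> simp <;> omega
  · rintro ⟨ha, hb, hc, hd⟩
    refine ⟨(⟨(p.1 - 1).toNat, by omega⟩, ⟨(p.2 - 1).toNat, by omega⟩), ?_⟩
    unfold gridZ
    simp [Prod.ext_iff]
    constructor <;> omega

lemma sum_if_gridZ {H W : ℕ} (f : ℤ × ℤ → ℝ) (p : ℤ × ℤ) :
    (∑ y : GridPt H W, if gridZ y = p then f (gridZ y) else 0)
      = if InU H W p then f p else 0 := by
  by_cases hp : InU H W p
  · obtain ⟨y0, hy0⟩ := (exists_gridZ_iff p).mpr hp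
    rw [Finset.sum_eq_single_of_mem y0 (Finset.mem_univ y0)]
    · simp [hy0, hp]
    · intro b _ hb
      have : gridZ b ≠ p := fun hh => hb (gridZ_inj (hh.trans hy0.symm))
      simp [this]
  · rw [Finset.sum_eq_zero, if_neg hp]
    intro y _
    have : gridZ y ≠ p := fun hh => hp ((exists_gridZ_iff p).mp ⟨y, hh⟩)
    simp [this]

lemma dir_ne_aux (p : ℤ × ℤ) (d1 d2 : ℤ × ℤ) (hne : d1 ≠ d2) : p + d1 ≠ p + d2 := by
  intro hh
  exact hne (by simpa using hh)

lemma adj_split {H W : ℕ} (p : ℤ × ℤ) (y : GridPt H W) (f : ℤ × ℤ → ℝ) :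
    (if adjZ p (gridZ y) then f (gridZ y) else 0)
      = ((if gridZ y = p + (1,0) then f (gridZ y) else 0)
        + (if gridZ y = p + (-1,0) then f (gridZ y) else 0))
        + ((if gridZ y = p + (0,1) then f (gridZ y) else 0)
        + (if gridZ y = p + (0,-1) then f (gridZ y) else 0)) := by
  have n12 : p + ((1:ℤ),(0:ℤ)) ≠ p + (-1,0) := dir_ne_aux p (1,0) (-1,0) (by decide)
  have n13 : p + ((1:ℤ),(0:ℤ)) ≠ p + (0,1) := dir_ne_aux p (1,0) (0,1) (by decide)
  have n14 : p + ((1:ℤ),(0:ℤ)) ≠ p + (0,-1) := dir_ne_aux p (1,0) (0,-1) (by decide)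
  have n23 : p + ((-1:ℤ),(0:ℤ)) ≠ p + (0,1) := dir_ne_aux p (-1,0) (0,1) (by decide)
  have n24 : p + ((-1:ℤ),(0:ℤ)) ≠ p + (0,-1) := dir_ne_aux p (-1,0) (0,-1) (by decide)
  have n34 : p + ((0:ℤ),(1:ℤ)) ≠ p + (0,-1) := dir_ne_aux p (0,1) (0,-1) (by decide)
  by_cases hadj : adjZ p (gridZ y)
  · rw [if_pos hadj]
    rcases (adjZ_iff p (gridZ y)).mp hadj with hh | hh | hh | hh <;> rw [hh]
    · simp [n12, n13, n14]
    · simp [Ne.symm n12, n23, n24]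
    · simp [Ne.symm n13, Ne.symm n23, n34]
    · simp [Ne.symm n14, Ne.symm n24, Ne.symm n34]
  · have hno : ¬ (gridZ y = p + (1,0) ∨ gridZ y = p + (-1,0) ∨
        gridZ y = p + (0,1) ∨ gridZ y = p + (0,-1)) := fun hh => hadj ((adjZ_iff p _).mpr hh)
    push_neg at hno
    rw [if_neg hadj, if_neg hno.1, if_neg hno.2.1, if_neg hno.2.2.1, if_neg hno.2.2.2]
    ring

lemma sum_adj {H W : ℕ} (p : ℤ × ℤ) (f : ℤ × ℤ → ℝ) :
    (∑ y : GridPt H W, if adjZ p (gridZ y) then f (gridZ y) else 0)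
      = ((if InU H W (p + (1,0)) then f (p + (1,0)) else 0)
        + (if InU H W (p + (-1,0)) then f (p + (-1,0)) else 0))
        + ((if InU H W (p + (0,1)) then f (p + (0,1)) else 0)
        + (if InU H W (p + (0,-1)) then f (p + (0,-1)) else 0)) := by
  calc (∑ y : GridPt H W, if adjZ p (gridZ y) then f (gridZ y) else 0)
      = ∑ y : GridPt H W,
        (((if gridZ y = p + (1,0) then f (gridZ y) else 0)
        + (if gridZ y = p + (-1,0) then f (gridZ y) else 0))
        + ((if gridZ y = p + (0,1) then f (gridZ y) else 0)
        + (if gridZ y = p + (0,-1) then f (gridZ y) else 0))) :=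
        Finset.sum_congr rfl fun y _ => adj_split p y f
    _ = _ := by
        rw [Finset.sum_add_distrib, Finset.sum_add_distrib, Finset.sum_add_distrib,
          sum_if_gridZ, sum_if_gridZ, sum_if_gridZ, sum_if_gridZ]

def bdTerm {H W : ℕ} (c : ℤ × ℤ → ℤ × ℤ → ℝ) (x : GridPt H W) : ℝ :=
  ((if InU H W (gridZ x + (1,0)) then 0 else c (gridZ x) (gridZ x + (1,0)))
    + (if InU H W (gridZ x + (-1,0)) then 0 else c (gridZ x) (gridZ x + (-1,0))))
    + ((if InU H W (gridZ x + (0,1)) then 0 else c (gridZ x) (gridZ x + (0,1)))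
    + (if InU H W (gridZ x + (0,-1)) then 0 else c (gridZ x) (gridZ x + (0,-1))))

lemma adjZ_add_dir (p : ℤ × ℤ) (d : ℤ × ℤ)
    (hd : d = (1,0) ∨ d = (-1,0) ∨ d = (0,1) ∨ d = (0,-1)) : adjZ p (p + d) = true := by
  apply (adjZ_iff p (p + d)).mpr
  rcases hd with rfl | rfl | rfl | rfl
  · exact Or.inl rfl
  · exact Or.inr (Or.inl rfl)
  · exact Or.inr (Or.inr (Or.inl rfl))
  · exact Or.inr (Or.inr (Or.inr rfl))

lemma bdTerm_nonneg {H W : ℕ} (c : ℤ × ℤ → ℤ × ℤ → ℝ)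
    (hpos : ∀ p q : ℤ × ℤ, adjZ p q → 0 < c p q) (x : GridPt H W) :
    0 ≤ bdTerm c x := by
  unfold bdTerm
  have h1 := hpos _ _ (adjZ_add_dir (gridZ x) (1,0) (Or.inl rfl))
  have h2 := hpos _ _ (adjZ_add_dir (gridZ x) (-1,0) (Or.inr (Or.inl rfl)))
  have h3 := hpos _ _ (adjZ_add_dir (gridZ x) (0,1) (Or.inr (Or.inr (Or.inl rfl))))
  have h4 := hpos _ _ (adjZ_add_dir (gridZ x) (0,-1) (Or.inr (Or.inr (Or.inr rfl))))
  have g1 : 0 ≤ (if InU H W (gridZ x + (1,0)) then 0 else c (gridZ x) (gridZ x + (1,0))) := by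
    split
    · exact le_refl 0
    · exact h1.le
  have g2 : 0 ≤ (if InU H W (gridZ x + (-1,0)) then 0 else c (gridZ x) (gridZ x + (-1,0))) := by
    split
    · exact le_refl 0
    · exact h2.le
  have g3 : 0 ≤ (if InU H W (gridZ x + (0,1)) then 0 else c (gridZ x) (gridZ x + (0,1))) := by
    split
    · exact le_refl 0
    · exact h3.le
  have g4 : 0 ≤ (if InU H W (gridZ x + (0,-1)) then 0 else c (gridZ x) (gridZ x + (0,-1))) := by
    split
    · exact le_refl 0
    · exact h4.le
  linarith

lemma diag_eq {H W : ℕ} (c : ℤ × ℤ → ℤ × ℤ → ℝ) (x : GridPt H W) :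
    dirichletLap H W c x x = dInt c x + bdTerm c x := by
  have hd : dirichletLap H W c x x
      = c (gridZ x) (gridZ x + (1,0)) + (c (gridZ x) (gridZ x + (-1,0))
        + (c (gridZ x) (gridZ x + (0,1)) + (c (gridZ x) (gridZ x + (0,-1)) + 0))) := by
    rw [dirichletLap, if_pos rfl]
    simp [List.sum_cons]
  have hint : dInt c x
      = ((if InU H W (gridZ x + (1,0)) then c (gridZ x) (gridZ x + (1,0)) else 0)
        + (if InU H W (gridZ x + (-1,0)) then c (gridZ x) (gridZ x + (-1,0)) else 0))
        + ((if InU H W (gridZ x + (0,1)) then c (gridZ x) (gridZ x + (0,1)) else 0)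
        + (if InU H W (gridZ x + (0,-1)) then c (gridZ x) (gridZ x + (0,-1)) else 0)) := by
    rw [dInt]
    exact sum_adj (gridZ x) (c (gridZ x))
  rw [hd, hint, bdTerm]
  by_cases i1 : InU H W (gridZ x + (1,0)) <;>
    by_cases i2 : InU H W (gridZ x + (-1,0)) <;>
    by_cases i3 : InU H W (gridZ x + (0,1)) <;>
    by_cases i4 : InU H W (gridZ x + (0,-1)) <;>
    simp only [if_pos, if_neg, i1, i2, i3, i4, ite_true, ite_false] <;> ring

lemma ite_mul_split (P : Prop) [Decidable P] (a b : ℝ) :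
    (if P then a * b else 0) = (if P then a else 0) * b := by
  split <;> simp

lemma qf_decomp {H W : ℕ} (c : ℤ × ℤ → ℤ × ℤ → ℝ)
    (hsym : ∀ p q : ℤ × ℤ, c p q = c q p) (v : GridPt H W → ℝ) :
    ∑ x : GridPt H W, ∑ y : GridPt H W, v x * dirichletLap H W c x y * v y
      = (∑ x : GridPt H W, bdTerm c x * (v x)^2)
        + (1/2) * ∑ x : GridPt H W, ∑ y : GridPt H W,
            (if adjZ (gridZ x) (gridZ y) then c (gridZ x) (gridZ y) * (v x - v y)^2 else 0) := by
  have key : ∀ x y : GridPt H W, v x * dirichletLap H W c x y * v y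
      = (if y = x then (dInt c x + bdTerm c x) * (v x)^2 else 0)
        + (if adjZ (gridZ x) (gridZ y) then -(c (gridZ x) (gridZ y) * (v x * v y)) else 0) := by
    intro x y
    by_cases hxy : x = y
    · subst hxy
      rw [diag_eq c x, if_pos rfl]
      have : adjZ (gridZ x) (gridZ x) = false := adjZ_self (gridZ x)
      rw [this]
      simp
      ring
    · rw [if_neg (Ne.symm hxy)]
      have hL : dirichletLap H W c x y
          = if adjZ (gridZ x) (gridZ y) then -c (gridZ x) (gridZ y) else 0 := by
        rw [dirichletLap, if_neg hxy]
      rw [hL]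
      split <;> simp <;> ring
  have hQF : ∑ x : GridPt H W, ∑ y : GridPt H W, v x * dirichletLap H W c x y * v y
      = (∑ x : GridPt H W, (dInt c x + bdTerm c x) * (v x)^2)
        - ∑ x : GridPt H W, ∑ y : GridPt H W,
            (if adjZ (gridZ x) (gridZ y) then c (gridZ x) (gridZ y) * (v x * v y) else 0) := by
    rw [← Finset.sum_sub_distrib]
    refine Finset.sum_congr rfl fun x _ => ?_
    rw [Finset.sum_congr rfl fun y (_ : y ∈ Finset.univ) => key x y,
      Finset.sum_add_distrib, Finset.sum_ite_eq' Finset.univ x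
        (fun _ => (dInt c x + bdTerm c x) * (v x)^2), if_pos (Finset.mem_univ x)]
    congr 1
    rw [← Finset.sum_neg_distrib]
    refine Finset.sum_congr rfl fun y _ => ?_
    split <;> simp
  -- energy expansion
  have hsq : ∀ x y : GridPt H W,
      (if adjZ (gridZ x) (gridZ y) then c (gridZ x) (gridZ y) * (v x - v y)^2 else 0)
      = ((if adjZ (gridZ x) (gridZ y) then c (gridZ x) (gridZ y) * (v x)^2 else 0)
        + (if adjZ (gridZ x) (gridZ y) then c (gridZ x) (gridZ y) * (v y)^2 else 0))
        - (if adjZ (gridZ x) (gridZ y) then 2 * (c (gridZ x) (gridZ y) * (v x * v y)) else 0) := by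
    intro x y
    split
    · ring
    · simp
  have hE1 : ∀ x : GridPt H W,
      (∑ y : GridPt H W, if adjZ (gridZ x) (gridZ y) then c (gridZ x) (gridZ y) * (v x)^2 else 0)
        = dInt c x * (v x)^2 := by
    intro x
    rw [dInt, Finset.sum_mul]
    exact Finset.sum_congr rfl fun y _ => ite_mul_split _ _ _
  have hE2 : (∑ x : GridPt H W, ∑ y : GridPt H W,
        if adjZ (gridZ x) (gridZ y) then c (gridZ x) (gridZ y) * (v y)^2 else 0)
      = ∑ x : GridPt H W, dInt c x * (v x)^2 := by
    rw [Finset.sum_comm]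
    refine Finset.sum_congr rfl fun y _ => ?_
    rw [← hE1 y]
    refine Finset.sum_congr rfl fun x _ => ?_
    rw [adjZ_symm (gridZ x) (gridZ y), hsym (gridZ x) (gridZ y)]
  have hEexp : ∑ x : GridPt H W, ∑ y : GridPt H W,
        (if adjZ (gridZ x) (gridZ y) then c (gridZ x) (gridZ y) * (v x - v y)^2 else 0)
      = 2 * (∑ x : GridPt H W, dInt c x * (v x)^2)
        - 2 * ∑ x : GridPt H W, ∑ y : GridPt H W,
            (if adjZ (gridZ x) (gridZ y) then c (gridZ x) (gridZ y) * (v x * v y) else 0) := by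
    have : ∀ x : GridPt H W, (∑ y : GridPt H W,
          (if adjZ (gridZ x) (gridZ y) then c (gridZ x) (gridZ y) * (v x - v y)^2 else 0))
        = ((∑ y : GridPt H W, if adjZ (gridZ x) (gridZ y) then c (gridZ x) (gridZ y) * (v x)^2 else 0)
          + (∑ y : GridPt H W, if adjZ (gridZ x) (gridZ y) then c (gridZ x) (gridZ y) * (v y)^2 else 0))
          - (∑ y : GridPt H W, if adjZ (gridZ x) (gridZ y) then 2 * (c (gridZ x) (gridZ y) * (v x * v y)) else 0) := by
      intro x
      rw [← Finset.sum_add_distrib, ← Finset.sum_sub_distrib]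
      exact Finset.sum_congr rfl fun y _ => hsq x y
    rw [Finset.sum_congr rfl fun x (_ : x ∈ Finset.univ) => this x, Finset.sum_sub_distrib,
      Finset.sum_add_distrib, hE2,
      Finset.sum_congr rfl fun x (_ : x ∈ Finset.univ) => hE1 x]
    have h2 : (∑ x : GridPt H W, ∑ y : GridPt H W,
          if adjZ (gridZ x) (gridZ y) then 2 * (c (gridZ x) (gridZ y) * (v x * v y)) else 0)
        = 2 * ∑ x : GridPt H W, ∑ y : GridPt H W,
            (if adjZ (gridZ x) (gridZ y) then c (gridZ x) (gridZ y) * (v x * v y) else 0) := by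
      rw [Finset.mul_sum]
      refine Finset.sum_congr rfl fun x _ => ?_
      rw [Finset.mul_sum]
      refine Finset.sum_congr rfl fun y _ => ?_
      split <;> simp
    rw [h2]
    ring
  rw [hQF, hEexp]
  have hsplit2 : ∑ x : GridPt H W, (dInt c x + bdTerm c x) * (v x)^2
      = (∑ x : GridPt H W, dInt c x * (v x)^2) + ∑ x : GridPt H W, bdTerm c x * (v x)^2 := by
    rw [← Finset.sum_add_distrib]
    exact Finset.sum_congr rfl fun x _ => by ring
  rw [hsplit2]
  ring

lemma qf_eq_dot {ι : Type*} [Fintype ι] (M : Matrix ι ι ℝ) (a : ι → ℝ) :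
    ∑ x, ∑ y, a x * M x y * a y = star a ⬝ᵥ (M *ᵥ a) := by
  simp only [dotProduct, mulVec, Pi.star_apply, star_trivial]
  refine Finset.sum_congr rfl fun x _ => ?_
  rw [Finset.mul_sum]
  refine Finset.sum_congr rfl fun y _ => ?_
  ring

lemma isHermitian_dirichletLap {H W : ℕ} (c : ℤ × ℤ → ℤ × ℤ → ℝ)
    (hsym : ∀ p q : ℤ × ℤ, c p q = c q p) : (dirichletLap H W c).IsHermitian := by
  rw [Matrix.IsHermitian]
  ext x y
  rw [Matrix.conjTranspose_apply, star_trivial]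
  unfold dirichletLap
  by_cases hxy : x = y
  · subst hxy; rfl
  · rw [if_neg hxy, if_neg (Ne.symm hxy), adjZ_symm (gridZ y) (gridZ x),
      hsym (gridZ y) (gridZ x)]

lemma posSemidef_dirichletLap {H W : ℕ} (c : ℤ × ℤ → ℤ × ℤ → ℝ)
    (hsym : ∀ p q : ℤ × ℤ, c p q = c q p)
    (hpos : ∀ p q : ℤ × ℤ, adjZ p q → 0 < c p q) :
    (dirichletLap H W c).PosSemidef := by
  refine Matrix.PosSemidef.of_dotProduct_mulVec_nonneg (isHermitian_dirichletLap c hsym) fun v => ?_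
  rw [← qf_eq_dot, qf_decomp c hsym v]
  have h1 : 0 ≤ ∑ x : GridPt H W, bdTerm c x * (v x)^2 :=
    Finset.sum_nonneg fun x _ => mul_nonneg (bdTerm_nonneg c hpos x) (sq_nonneg _)
  have h2 : 0 ≤ ∑ x : GridPt H W, ∑ y : GridPt H W,
      (if adjZ (gridZ x) (gridZ y) then c (gridZ x) (gridZ y) * (v x - v y)^2 else 0) := by
    refine Finset.sum_nonneg fun x _ => Finset.sum_nonneg fun y _ => ?_
    split
    · next hadj => exact mul_nonneg (hpos _ _ hadj).le (sq_nonneg _)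
    · exact le_refl 0
  linarith

lemma cov_qf_nonneg {H W : ℕ} (c : ℤ × ℤ → ℤ × ℤ → ℝ)
    (hsym : ∀ p q : ℤ × ℤ, c p q = c q p)
    (hpos : ∀ p q : ℤ × ℤ, adjZ p q → 0 < c p q)
    (β : ℝ) (hβ : 0 < β) (a : GridPt H W → ℝ) :
    0 ≤ ∑ x, ∑ y, a x * (β⁻¹ • (dirichletLap H W c)⁻¹) x y * a y := by
  have hpsd : ((dirichletLap H W c)⁻¹).PosSemidef := (posSemidef_dirichletLap c hsym hpos).inv
  have := hpsd.dotProduct_mulVec_nonneg a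
  have heq : ∑ x, ∑ y, a x * (β⁻¹ • (dirichletLap H W c)⁻¹) x y * a y
      = β⁻¹ * ∑ x, ∑ y, a x * ((dirichletLap H W c)⁻¹) x y * a y := by
    rw [Finset.mul_sum]
    refine Finset.sum_congr rfl fun x _ => ?_
    rw [Finset.mul_sum]
    refine Finset.sum_congr rfl fun y _ => ?_
    rw [Matrix.smul_apply, smul_eq_mul]
    ring
  rw [heq, qf_eq_dot]
  exact mul_nonneg (inv_nonneg.mpr hβ.le) this

lemma cov_symm {H W : ℕ} (c : ℤ × ℤ → ℤ × ℤ → ℝ)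
    (hsym : ∀ p q : ℤ × ℤ, c p q = c q p) (β : ℝ) (x y : GridPt H W) :
    (β⁻¹ • (dirichletLap H W c)⁻¹) x y = (β⁻¹ • (dirichletLap H W c)⁻¹) y x := by
  have hherm : ((dirichletLap H W c)⁻¹).IsHermitian :=
    (isHermitian_dirichletLap c hsym).inv
  have := congrFun (congrFun hherm.symm y) x
  rw [Matrix.conjTranspose_apply, star_trivial] at this
  rw [Matrix.smul_apply, Matrix.smul_apply, ← this]

lemma sum_pm {ι : Type*} [Fintype ι] [DecidableEq ι] (x y : ι) (hxy : x ≠ y)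
    (a f : ι → ℝ) (h1 : a x = 1) (h2 : a y = -1) (h0 : ∀ z, z ≠ x → z ≠ y → a z = 0) :
    ∑ z, a z * f z = f x - f y := by
  have hpt : ∀ z, a z * f z
      = (if z = x then f z else 0) - (if z = y then f z else 0) := by
    intro z
    by_cases hzx : z = x
    · subst hzx
      rw [if_pos rfl, if_neg hxy, h1]
      ring
    · rw [if_neg hzx]
      by_cases hzy : z = y
      · subst hzy
        rw [if_pos rfl, h2]
        ring
      · rw [if_neg hzy, h0 z hzx hzy]
        ring
  rw [Finset.sum_congr rfl fun z _ => hpt z, Finset.sum_sub_distrib,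
    Finset.sum_ite_eq' Finset.univ x f, Finset.sum_ite_eq' Finset.univ y f,
    if_pos (Finset.mem_univ x), if_pos (Finset.mem_univ y)]

lemma qf_pm {ι : Type*} [Fintype ι] [DecidableEq ι] (M : Matrix ι ι ℝ) (x y : ι) (hxy : x ≠ y)
    (a : ι → ℝ) (h1 : a x = 1) (h2 : a y = -1) (h0 : ∀ z, z ≠ x → z ≠ y → a z = 0) :
    ∑ x', ∑ y', a x' * M x' y' * a y'
      = ((M x x - M x y) - (M y x - M y y)) := by
  have hin : ∀ x', ∑ y', a x' * M x' y' * a y' = a x' * (M x' x - M x' y) := by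
    intro x'
    rw [← sum_pm x y hxy a (fun y' => M x' y') h1 h2 h0, Finset.mul_sum]
    exact Finset.sum_congr rfl fun y' _ => by ring
  rw [Finset.sum_congr rfl fun x' _ => hin x']
  exact sum_pm x y hxy a (fun x' => M x' x - M x' y) h1 h2 h0

lemma trace_lint_eq {H W : ℕ} (c : ℤ × ℤ → ℤ × ℤ → ℝ)
    (M : Matrix (GridPt H W) (GridPt H W) ℝ) :
    Matrix.trace (Lint H W c * M)
      = ∑ x : GridPt H W, ∑ y : GridPt H W,
          (if adjZ (gridZ x) (gridZ y) then c (gridZ x) (gridZ y) * (M x x - M y x) else 0) := by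
  rw [Matrix.trace]
  refine Finset.sum_congr rfl fun x _ => ?_
  rw [Matrix.diag_apply, Matrix.mul_apply]
  have hpt : ∀ y : GridPt H W, Lint H W c x y * M y x
      = (if y = x then dInt c x * M x x else 0)
        + (if adjZ (gridZ x) (gridZ y) then -(c (gridZ x) (gridZ y) * M y x) else 0) := by
    intro y
    by_cases hxy : x = y
    · subst hxy
      rw [if_pos rfl, Lint, if_pos rfl, adjZ_self]
      simp
    · rw [if_neg (Ne.symm hxy), Lint, if_neg hxy]
      split <;> simp <;> ring
  rw [Finset.sum_congr rfl fun y _ => hpt y, Finset.sum_add_distrib,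
    Finset.sum_ite_eq' Finset.univ x (fun _ => dInt c x * M x x), if_pos (Finset.mem_univ x)]
  have hd : dInt c x * M x x = ∑ y : GridPt H W,
      (if adjZ (gridZ x) (gridZ y) then c (gridZ x) (gridZ y) * M x x else 0) := by
    rw [dInt, Finset.sum_mul]
    exact Finset.sum_congr rfl fun y _ => (ite_mul_split _ _ _).symm
  rw [hd, ← Finset.sum_add_distrib]
  refine Finset.sum_congr rfl fun y _ => ?_
  split
  · ring
  · simp

lemma energy_trace {H W : ℕ} (c : ℤ × ℤ → ℤ × ℤ → ℝ)
    (hsym : ∀ p q : ℤ × ℤ, c p q = c q p)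
    (M : Matrix (GridPt H W) (GridPt H W) ℝ) (hM : ∀ x y, M x y = M y x) :
    (1/4) * ∑ x : GridPt H W, ∑ y : GridPt H W,
        (if adjZ (gridZ x) (gridZ y) then
          c (gridZ x) (gridZ y) * ((M x x - M x y) - (M y x - M y y)) else 0)
      = (1/2) * Matrix.trace (Lint H W c * M) := by
  rw [trace_lint_eq c M]
  have key : ∀ x y : GridPt H W,
      (if adjZ (gridZ x) (gridZ y) then
          c (gridZ x) (gridZ y) * ((M x x - M x y) - (M y x - M y y)) else 0)
      = (if adjZ (gridZ x) (gridZ y) then c (gridZ x) (gridZ y) * (M x x - M y x) else 0)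
        + (if adjZ (gridZ x) (gridZ y) then c (gridZ x) (gridZ y) * (M y y - M x y) else 0) := by
    intro x y
    split
    · ring
    · simp
  have hswap : (∑ x : GridPt H W, ∑ y : GridPt H W,
        (if adjZ (gridZ x) (gridZ y) then c (gridZ x) (gridZ y) * (M y y - M x y) else 0))
      = ∑ x : GridPt H W, ∑ y : GridPt H W,
        (if adjZ (gridZ x) (gridZ y) then c (gridZ x) (gridZ y) * (M x x - M y x) else 0) := by
    rw [Finset.sum_comm]
    refine Finset.sum_congr rfl fun y _ => Finset.sum_congr rfl fun x _ => ?_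
    rw [adjZ_symm (gridZ x) (gridZ y), hsym (gridZ x) (gridZ y), hM x y]
  calc (1/4) * ∑ x : GridPt H W, ∑ y : GridPt H W,
        (if adjZ (gridZ x) (gridZ y) then
          c (gridZ x) (gridZ y) * ((M x x - M x y) - (M y x - M y y)) else 0)
      = (1/4) * ((∑ x : GridPt H W, ∑ y : GridPt H W,
          (if adjZ (gridZ x) (gridZ y) then c (gridZ x) (gridZ y) * (M x x - M y x) else 0))
        + ∑ x : GridPt H W, ∑ y : GridPt H W,
          (if adjZ (gridZ x) (gridZ y) then c (gridZ x) (gridZ y) * (M y y - M x y) else 0)) := by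
        rw [← Finset.sum_add_distrib]
        congr 1
        refine Finset.sum_congr rfl fun x _ => ?_
        rw [← Finset.sum_add_distrib]
        exact Finset.sum_congr rfl fun y _ => key x y
    _ = _ := by rw [hswap]; ring

end AuxGrid

/-- Exact expected intrinsic roughness budget for the sample-wise gate:
`𝔼[𝓔_int(log h̃)] = 𝓔_int(log h) + γ² ε_int` with
`ε_int = 𝔼[𝓔_int(ψ)] = (1/2) Tr(L_int C)`. -/
theorem samplewise_gate_intrinsic_budget {H W : ℕ}
    (c : ℤ × ℤ → ℤ × ℤ → ℝ)
    (hsym : ∀ p q : ℤ × ℤ, c p q = c q p)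
    (hpos : ∀ p q : ℤ × ℤ, adjZ p q → 0 < c p q)
    (β : ℝ) (hβ : 0 < β) (γ : ℝ)
    {Ω : Type*} [MeasurableSpace Ω] (P : Measure Ω) [IsProbabilityMeasure P]
    (ψ : Ω → GridPt H W → ℝ) (hψ : Measurable ψ)
    (hgauss : IsCenteredGaussianField P ψ (β⁻¹ • (dirichletLap H W c)⁻¹))
    (h : GridPt H W → ℝ) (hh : ∀ x, 0 < h x) :
    (∫ ω, Eint c (fun x => Real.log (swGate γ (ψ ω) x * h x)) ∂P) =
      Eint c (fun x => Real.log (h x)) + γ ^ 2 * (∫ ω, Eint c (ψ ω) ∂P) ∧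
    (∫ ω, Eint c (ψ ω) ∂P) =
      (1 / 2) * Matrix.trace (Lint H W c * (β⁻¹ • (dirichletLap H W c)⁻¹)) := by
  classical
  have hψx : ∀ x : GridPt H W, Measurable (fun ω => ψ ω x) :=
    fun x => (measurable_pi_apply x).comp hψ
  have key : ∀ x y : GridPt H W, x ≠ y →
      Integrable (fun ω => ψ ω x - ψ ω y) P ∧ (∫ ω, (ψ ω x - ψ ω y) ∂P) = 0 ∧
      Integrable (fun ω => (ψ ω x - ψ ω y) ^ 2) P ∧
      (∫ ω, (ψ ω x - ψ ω y) ^ 2 ∂P) =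
        (((β⁻¹ • (dirichletLap H W c)⁻¹) x x - (β⁻¹ • (dirichletLap H W c)⁻¹) x y)
          - ((β⁻¹ • (dirichletLap H W c)⁻¹) y x - (β⁻¹ • (dirichletLap H W c)⁻¹) y y)) := by
    intro x y hxy
    set a : GridPt H W → ℝ := fun z => if z = x then (1:ℝ) else if z = y then -1 else 0
      with hadef
    have h1 : a x = 1 := by simp [hadef]
    have hyx : y ≠ x := Ne.symm hxy
    have h2 : a y = -1 := by simp [hadef, hyx]
    have h0 : ∀ z, z ≠ x → z ≠ y → a z = 0 := by
      intro z hz1 hz2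
      simp [hadef, hz1, hz2]
    have hmap := hgauss a
    have hTeq : (fun ω => ∑ z, a z * ψ ω z) = fun ω => ψ ω x - ψ ω y :=
      funext fun ω => sum_pm x y hxy a (ψ ω) h1 h2 h0
    rw [hTeq] at hmap
    have hqf := qf_pm (β⁻¹ • (dirichletLap H W c)⁻¹) x y hxy a h1 h2 h0
    have hnn := cov_qf_nonneg c hsym hpos β hβ a
    obtain ⟨i1, i2, i3, i4⟩ := my_gaussian_map_moments P _ ((hψx x).sub (hψx y)) _ hmap
    exact ⟨i1, i2, i3, i4.trans (by rw [Real.coe_toNNReal _ hnn, hqf])⟩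
  have hadj_ne : ∀ x y : GridPt H W, adjZ (gridZ x) (gridZ y) = true → x ≠ y := by
    intro x y hadj heq
    subst heq
    rw [adjZ_self] at hadj
    exact Bool.false_ne_true hadj
  have hsummandInt : ∀ x y : GridPt H W,
      Integrable (fun ω => if adjZ (gridZ x) (gridZ y) then
        c (gridZ x) (gridZ y) * (ψ ω x - ψ ω y) ^ 2 else 0) P := by
    intro x y
    by_cases hadj : adjZ (gridZ x) (gridZ y) = true
    · simp only [if_pos hadj]
      exact ((key x y (hadj_ne x y hadj)).2.2.1).const_mul _
    · simp only [if_neg hadj]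
      exact integrable_const 0
  have hEintψ_int : Integrable (fun ω => Eint c (ψ ω)) P := by
    have heq : (fun ω => Eint c (ψ ω)) = fun ω => (1/4 : ℝ) *
        ∑ x : GridPt H W, ∑ y : GridPt H W, (if adjZ (gridZ x) (gridZ y) then
          c (gridZ x) (gridZ y) * (ψ ω x - ψ ω y) ^ 2 else 0) := by
      funext ω
      rw [Eint]
    rw [heq]
    exact (integrable_finset_sum _ fun x _ =>
      integrable_finset_sum _ fun y _ => hsummandInt x y).const_mul _
  have hEintψ_val : (∫ ω, Eint c (ψ ω) ∂P)
      = (1/4 : ℝ) * ∑ x : GridPt H W, ∑ y : GridPt H W,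
          (if adjZ (gridZ x) (gridZ y) then c (gridZ x) (gridZ y) *
            (((β⁻¹ • (dirichletLap H W c)⁻¹) x x - (β⁻¹ • (dirichletLap H W c)⁻¹) x y)
              - ((β⁻¹ • (dirichletLap H W c)⁻¹) y x - (β⁻¹ • (dirichletLap H W c)⁻¹) y y))
            else 0) := by
    have heq : (fun ω => Eint c (ψ ω)) = fun ω => (1/4 : ℝ) *
        ∑ x : GridPt H W, ∑ y : GridPt H W, (if adjZ (gridZ x) (gridZ y) then
          c (gridZ x) (gridZ y) * (ψ ω x - ψ ω y) ^ 2 else 0) := by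
      funext ω
      rw [Eint]
    rw [heq, integral_const_mul, integral_finset_sum _
      (fun x _ => integrable_finset_sum _ fun y _ => hsummandInt x y)]
    congr 1
    refine Finset.sum_congr rfl fun x _ => ?_
    rw [integral_finset_sum _ (fun y _ => hsummandInt x y)]
    refine Finset.sum_congr rfl fun y _ => ?_
    by_cases hadj : adjZ (gridZ x) (gridZ y) = true
    · simp only [if_pos hadj]
      rw [integral_const_mul, (key x y (hadj_ne x y hadj)).2.2.2]
    · simp only [if_neg hadj]
      exact integral_zero Ω ℝ
  have part2 : (∫ ω, Eint c (ψ ω) ∂P)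
      = (1/2 : ℝ) * Matrix.trace (Lint H W c * (β⁻¹ • (dirichletLap H W c)⁻¹)) := by
    rw [hEintψ_val]
    exact energy_trace c hsym _ (cov_symm c hsym β)
  refine ⟨?_, part2⟩
  rcases isEmpty_or_nonempty (GridPt H W) with hE | hNE
  · have hzero : ∀ f : GridPt H W → ℝ, Eint c f = 0 := by
      intro f
      rw [Eint, Finset.univ_eq_empty, Finset.sum_empty, mul_zero]
    simp only [hzero, integral_zero, mul_zero, add_zero]
  · have hcard : (0:ℝ) < (Fintype.card (GridPt H W) : ℝ) := by
      exact_mod_cast Fintype.card_pos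
    have hlog : ∀ (ω : Ω) (x : GridPt H W), Real.log (swGate γ (ψ ω) x * h x)
        = γ * ψ ω x
          - Real.log ((∑ y : GridPt H W, rexp (γ * ψ ω y)) / (Fintype.card (GridPt H W) : ℝ))
          + Real.log (h x) := by
      intro ω x
      have hS : 0 < ∑ y : GridPt H W, rexp (γ * ψ ω y) :=
        Finset.sum_pos (fun y _ => Real.exp_pos _) Finset.univ_nonempty
      have hD : 0 < (∑ y : GridPt H W, rexp (γ * ψ ω y)) / (Fintype.card (GridPt H W) : ℝ) :=
        div_pos hS hcard
      rw [swGate, Real.log_mul (by positivity) (ne_of_gt (hh x)),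
        Real.log_div (Real.exp_ne_zero _) (ne_of_gt hD), Real.log_exp]
    have hdecomp : ∀ ω : Ω, Eint c (fun x => Real.log (swGate γ (ψ ω) x * h x))
        = Eint c (fun x => Real.log (h x)) + γ ^ 2 * Eint c (ψ ω)
          + (1/4 : ℝ) * ∑ x : GridPt H W, ∑ y : GridPt H W,
              (if adjZ (gridZ x) (gridZ y) then
                (2 * γ * (c (gridZ x) (gridZ y) * (Real.log (h x) - Real.log (h y))))
                  * (ψ ω x - ψ ω y) else 0) := by
      intro ω
      simp only [Eint]
      have hpt : ∀ x y : GridPt H W,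
          (if adjZ (gridZ x) (gridZ y) then c (gridZ x) (gridZ y) *
              (Real.log (swGate γ (ψ ω) x * h x) - Real.log (swGate γ (ψ ω) y * h y)) ^ 2 else 0)
          = (if adjZ (gridZ x) (gridZ y) then c (gridZ x) (gridZ y) *
              (Real.log (h x) - Real.log (h y)) ^ 2 else 0)
            + γ ^ 2 * (if adjZ (gridZ x) (gridZ y) then c (gridZ x) (gridZ y) *
              (ψ ω x - ψ ω y) ^ 2 else 0)
            + (if adjZ (gridZ x) (gridZ y) then
                (2 * γ * (c (gridZ x) (gridZ y) * (Real.log (h x) - Real.log (h y))))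
                  * (ψ ω x - ψ ω y) else 0) := by
        intro x y
        by_cases hadj : adjZ (gridZ x) (gridZ y) = true
        · simp only [if_pos hadj]
          rw [hlog ω x, hlog ω y]
          ring
        · simp only [if_neg hadj]
          ring
      have hinner : ∀ x : GridPt H W,
          (∑ y : GridPt H W, (if adjZ (gridZ x) (gridZ y) then c (gridZ x) (gridZ y) *
              (Real.log (swGate γ (ψ ω) x * h x) - Real.log (swGate γ (ψ ω) y * h y)) ^ 2 else 0))
          = (∑ y : GridPt H W, (if adjZ (gridZ x) (gridZ y) then c (gridZ x) (gridZ y) *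
              (Real.log (h x) - Real.log (h y)) ^ 2 else 0))
            + γ ^ 2 * (∑ y : GridPt H W, (if adjZ (gridZ x) (gridZ y) then c (gridZ x) (gridZ y) *
              (ψ ω x - ψ ω y) ^ 2 else 0))
            + (∑ y : GridPt H W, (if adjZ (gridZ x) (gridZ y) then
                (2 * γ * (c (gridZ x) (gridZ y) * (Real.log (h x) - Real.log (h y))))
                  * (ψ ω x - ψ ω y) else 0)) := by
        intro x
        rw [Finset.sum_congr rfl fun y _ => hpt x y, Finset.sum_add_distrib,
          Finset.sum_add_distrib, Finset.mul_sum]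
      rw [Finset.sum_congr rfl fun x (_ : x ∈ Finset.univ) => hinner x,
        Finset.sum_add_distrib, Finset.sum_add_distrib, ← Finset.mul_sum]
      ring
    have hcross_int : ∀ x y : GridPt H W,
        Integrable (fun ω => if adjZ (gridZ x) (gridZ y) then
          (2 * γ * (c (gridZ x) (gridZ y) * (Real.log (h x) - Real.log (h y))))
            * (ψ ω x - ψ ω y) else 0) P := by
      intro x y
      by_cases hadj : adjZ (gridZ x) (gridZ y) = true
      · simp only [if_pos hadj]
        exact ((key x y (hadj_ne x y hadj)).1).const_mul _
      · simp only [if_neg hadj]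
        exact integrable_const 0
    have hcross_val : ∀ x y : GridPt H W,
        (∫ ω, (if adjZ (gridZ x) (gridZ y) then
          (2 * γ * (c (gridZ x) (gridZ y) * (Real.log (h x) - Real.log (h y))))
            * (ψ ω x - ψ ω y) else 0) ∂P) = 0 := by
      intro x y
      by_cases hadj : adjZ (gridZ x) (gridZ y) = true
      · simp only [if_pos hadj]
        rw [integral_const_mul, (key x y (hadj_ne x y hadj)).2.1, mul_zero]
      · simp only [if_neg hadj]
        exact integral_zero Ω ℝ
    have hXint : Integrable (fun ω => (1/4 : ℝ) * ∑ x : GridPt H W, ∑ y : GridPt H W,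
        (if adjZ (gridZ x) (gridZ y) then
          (2 * γ * (c (gridZ x) (gridZ y) * (Real.log (h x) - Real.log (h y))))
            * (ψ ω x - ψ ω y) else 0)) P :=
      (integrable_finset_sum _ fun x _ =>
        integrable_finset_sum _ fun y _ => hcross_int x y).const_mul _
    have hXzero : (∫ ω, ((1/4 : ℝ) * ∑ x : GridPt H W, ∑ y : GridPt H W,
        (if adjZ (gridZ x) (gridZ y) then
          (2 * γ * (c (gridZ x) (gridZ y) * (Real.log (h x) - Real.log (h y))))
            * (ψ ω x - ψ ω y) else 0)) ∂P) = 0 := by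
      rw [integral_const_mul, integral_finset_sum _
        (fun x _ => integrable_finset_sum _ fun y _ => hcross_int x y)]
      have hx0 : ∀ x : GridPt H W, (∫ ω, (∑ y : GridPt H W,
          (if adjZ (gridZ x) (gridZ y) then
            (2 * γ * (c (gridZ x) (gridZ y) * (Real.log (h x) - Real.log (h y))))
              * (ψ ω x - ψ ω y) else 0)) ∂P) = 0 := by
        intro x
        rw [integral_finset_sum _ (fun y _ => hcross_int x y),
          Finset.sum_congr rfl fun y _ => hcross_val x y, Finset.sum_const_zero]
      rw [Finset.sum_congr rfl fun x (_ : x ∈ Finset.univ) => hx0 x,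
        Finset.sum_const_zero, mul_zero]
    have hfun : (fun ω => Eint c (fun x => Real.log (swGate γ (ψ ω) x * h x)))
        = fun ω => Eint c (fun x => Real.log (h x))
          + (γ ^ 2 * Eint c (ψ ω) + (1/4 : ℝ) * ∑ x : GridPt H W, ∑ y : GridPt H W,
        (if adjZ (gridZ x) (gridZ y) then
          (2 * γ * (c (gridZ x) (gridZ y) * (Real.log (h x) - Real.log (h y))))
            * (ψ ω x - ψ ω y) else 0)) := by
      funext ω
      rw [hdecomp ω]
      ring
    have e1 : (∫ ω, (Eint c (fun x => Real.log (h x))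
          + (γ ^ 2 * Eint c (ψ ω) + (1/4 : ℝ) * ∑ x : GridPt H W, ∑ y : GridPt H W,
        (if adjZ (gridZ x) (gridZ y) then
          (2 * γ * (c (gridZ x) (gridZ y) * (Real.log (h x) - Real.log (h y))))
            * (ψ ω x - ψ ω y) else 0))) ∂P)
        = (∫ _ω : Ω, Eint c (fun x => Real.log (h x)) ∂P)
          + ∫ ω, (γ ^ 2 * Eint c (ψ ω) + (1/4 : ℝ) * ∑ x : GridPt H W, ∑ y : GridPt H W,
        (if adjZ (gridZ x) (gridZ y) then
          (2 * γ * (c (gridZ x) (gridZ y) * (Real.log (h x) - Real.log (h y))))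
            * (ψ ω x - ψ ω y) else 0)) ∂P :=
      integral_add (integrable_const _) ((hEintψ_int.const_mul _).add hXint)
    have e2 : (∫ ω, (γ ^ 2 * Eint c (ψ ω) + (1/4 : ℝ) * ∑ x : GridPt H W, ∑ y : GridPt H W,
        (if adjZ (gridZ x) (gridZ y) then
          (2 * γ * (c (gridZ x) (gridZ y) * (Real.log (h x) - Real.log (h y))))
            * (ψ ω x - ψ ω y) else 0)) ∂P)
        = (∫ ω, γ ^ 2 * Eint c (ψ ω) ∂P) + ∫ ω, ((1/4 : ℝ) * ∑ x : GridPt H W, ∑ y : GridPt H W,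
        (if adjZ (gridZ x) (gridZ y) then
          (2 * γ * (c (gridZ x) (gridZ y) * (Real.log (h x) - Real.log (h y))))
            * (ψ ω x - ψ ω y) else 0)) ∂P :=
      integral_add (hEintψ_int.const_mul _) hXint
    rw [hfun, e1, e2, hXzero, integral_const_mul, integral_const]
    simp
end
end

section
/- Let q∈(0,1), assume the intrinsic edge set E_int on the grid U contains at least one edge, and let h(x) ≡ c on U for a constant c ≠ 0. Then 𝓔_int(h) = 0, while under inverted dropout with keep probability q, 𝔼[𝓔_int(m_q ⊙ h)] = ((1−q)/(2q))·c²·Σ_{x∈U} d_x^int > 0; hence the post-mask field has strictly positive expected intrinsic roughness despite starting from a perfectly coherent field. -/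
open MeasureTheory Real

noncomputable section
/-- Inverted-dropout mask `m_q(x) = b(x)/q` built from a Boolean keep pattern `ω`. -/
def maskD {ι : Type*} (q : ℝ) (ω : ι → Bool) (x : ι) : ℝ :=
  (if ω x then (1 : ℝ) else 0) / q

/-- The law of i.i.d. `Bernoulli(q)` keep variables indexed by `ι`
(the canonical product measure, i.e. i.i.d. coordinates). -/
def bernoulliPi (ι : Type*) [Fintype ι] (q : ℝ) (hq : q ≤ 1) :
    MeasureTheory.Measure (ι → Bool) :=
  MeasureTheory.Measure.pi fun _ =>
    (PMF.bernoulli (Real.toNNReal q) (Real.toNNReal_le_one.mpr hq)).toMeasure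

namespace DropoutAux

/-- Product of single-coordinate integrals over a finite product of probability measures. -/
lemma pi_integral_prod {ι : Type*} [Fintype ι] [DecidableEq ι] (μ1 : Measure Bool) [IsProbabilityMeasure μ1]
    (f : ι → Bool → ℝ) :
    ∫ ω : ι → Bool, ∏ i, f i (ω i) ∂(Measure.pi fun _ => μ1) = ∏ i, ∫ b, f i b ∂μ1 := by
  letI : MeasureSpace Bool := { toMeasurableSpace := inferInstance, volume := μ1 }
  exact MeasureTheory.integral_fintype_prod_eq_prod (μ := fun _ => μ1) f

lemma measure_univ_bool (μ1 : Measure Bool) [IsProbabilityMeasure μ1] :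
    (μ1 {false, true}).toReal = 1 := by
  have : ({false, true} : Set Bool) = Set.univ := by ext b; cases b <;> simp
  rw [this, measure_univ, ENNReal.toReal_one]

lemma pi_integral_eval {ι : Type*} [Fintype ι] [DecidableEq ι] (μ1 : Measure Bool) [IsProbabilityMeasure μ1]
    (x : ι) (g : Bool → ℝ) :
    ∫ ω : ι → Bool, g (ω x) ∂(Measure.pi fun _ => μ1) = ∫ b, g b ∂μ1 := by
  have h : ∀ ω : ι → Bool, g (ω x) = ∏ i, (if i = x then g (ω i) else 1) := by
    intro ω; simp [Finset.prod_ite_eq']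
  calc ∫ ω : ι → Bool, g (ω x) ∂(Measure.pi fun _ => μ1)
      = ∫ ω : ι → Bool, ∏ i, (fun i b => if i = x then g b else 1) i (ω i)
          ∂(Measure.pi fun _ => μ1) := by simp only [h]
    _ = ∏ i, ∫ b, (if i = x then g b else 1 : ℝ) ∂μ1 :=
        pi_integral_prod (ι := ι) μ1 (fun i b => if i = x then g b else 1)
    _ = ∫ b, g b ∂μ1 := by
        have : ∀ i, (∫ b, (if i = x then g b else 1 : ℝ) ∂μ1)
            = if i = x then ∫ b, g b ∂μ1 else 1 := by
          intro i; by_cases hi : i = x <;> simp [hi, measureReal_def, measure_univ_bool μ1]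
        simp only [this, Finset.prod_ite_eq']; simp

lemma pi_integral_two {ι : Type*} [Fintype ι] [DecidableEq ι] (μ1 : Measure Bool) [IsProbabilityMeasure μ1]
    {x y : ι} (hxy : x ≠ y) (g : Bool → ℝ) :
    ∫ ω : ι → Bool, g (ω x) * g (ω y) ∂(Measure.pi fun _ => μ1)
      = (∫ b, g b ∂μ1) * (∫ b, g b ∂μ1) := by
  have h : ∀ ω : ι → Bool, g (ω x) * g (ω y)
      = ∏ i, ((if i = x then g (ω i) else 1) * (if i = y then g (ω i) else 1)) := by
    intro ω
    rw [Finset.prod_mul_distrib]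
    simp [Finset.prod_ite_eq']
  calc ∫ ω : ι → Bool, g (ω x) * g (ω y) ∂(Measure.pi fun _ => μ1)
      = ∫ ω : ι → Bool, ∏ i, (fun i b =>
          (if i = x then g b else 1) * (if i = y then g b else 1)) i (ω i)
          ∂(Measure.pi fun _ => μ1) := by simp only [h]
    _ = ∏ i, ∫ b, ((if i = x then g b else 1) * (if i = y then g b else 1) : ℝ) ∂μ1 :=
        pi_integral_prod (ι := ι) μ1
          (fun i b => (if i = x then g b else 1) * (if i = y then g b else 1))
    _ = (∫ b, g b ∂μ1) * (∫ b, g b ∂μ1) := by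
        have key : ∀ i, (∫ b, ((if i = x then g b else 1) * (if i = y then g b else 1) : ℝ) ∂μ1)
            = (if i = x then ∫ b, g b ∂μ1 else 1) * (if i = y then ∫ b, g b ∂μ1 else 1) := by
          intro i
          by_cases hix : i = x <;> by_cases hiy : i = y
          · exact absurd (hix ▸ hiy) hxy
          · simp [hix, hiy, hxy, Ne.symm hxy, measure_univ_bool μ1]
          · simp [hix, hiy, hxy, Ne.symm hxy, measure_univ_bool μ1]
          · simp [hix, hiy, measureReal_def, measure_univ_bool μ1]
        simp only [key]
        rw [Finset.prod_mul_distrib]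
        simp [Finset.prod_ite_eq']

lemma bernoulli_integral {q : ℝ} (hq0 : 0 ≤ q) (hq1 : q ≤ 1) (g : Bool → ℝ) :
    ∫ b, g b ∂((PMF.bernoulli (Real.toNNReal q) (Real.toNNReal_le_one.mpr hq1)).toMeasure)
      = q * g true + (1 - q) * g false := by
  set μ1 := (PMF.bernoulli (Real.toNNReal q) (Real.toNNReal_le_one.mpr hq1)).toMeasure with hμ1
  have h1 : μ1 {true} = ENNReal.ofReal q := by
    rw [hμ1, PMF.toMeasure_apply_singleton _ _ (measurableSet_singleton _)]; rfl
  have h2 : μ1 {false} = 1 - ENNReal.ofReal q := by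
    rw [hμ1, PMF.toMeasure_apply_singleton _ _ (measurableSet_singleton _)]; rfl
  rw [integral_fintype (Integrable.of_finite)]
  rw [Fintype.sum_bool, measureReal_def, measureReal_def, h1, h2]
  rw [ENNReal.toReal_sub_of_le (ENNReal.ofReal_le_one.mpr hq1) ENNReal.one_ne_top]
  simp [ENNReal.toReal_ofReal hq0, smul_eq_mul]


end DropoutAux

open DropoutAux in
/-- Immediate loss of perfect coherence under inverted dropout in
expectation: if the intrinsic edge set is nonempty and `h ≡ c₀ ≠ 0` is constant, then
`𝓔_int(h) = 0` while
`𝔼[𝓔_int(m_q ⊙ h)] = ((1−q)/(2q)) c₀² ∑_x d_x^int > 0`. -/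
theorem dropout_destroys_perfect_coherence {H W : ℕ}
    (c : ℤ × ℤ → ℤ × ℤ → ℝ)
    (hsym : ∀ p q : ℤ × ℤ, c p q = c q p)
    (hpos : ∀ p q : ℤ × ℤ, adjZ p q → 0 < c p q)
    (hedge : ∃ x y : GridPt H W, adjZ (gridZ x) (gridZ y))
    (q : ℝ) (hq0 : 0 < q) (hq1 : q < 1)
    (c₀ : ℝ) (hc₀ : c₀ ≠ 0) :
    Eint c (fun _ : GridPt H W => c₀) = 0 ∧
    (∫ ω, Eint c (fun x => maskD q ω x * c₀) ∂(bernoulliPi (GridPt H W) q hq1.le)) =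
      ((1 - q) / (2 * q)) * c₀ ^ 2 * ∑ x : GridPt H W, dInt c x ∧
    0 < (∫ ω, Eint c (fun x => maskD q ω x * c₀) ∂(bernoulliPi (GridPt H W) q hq1.le)) := by
  classical
  have part1 : Eint c (fun _ : GridPt H W => c₀) = 0 := by
    simp [Eint]
  set μ1 := (PMF.bernoulli (Real.toNNReal q) (Real.toNNReal_le_one.mpr hq1.le)).toMeasure
    with hμ1
  have hμ : bernoulliPi (GridPt H W) q hq1.le = Measure.pi fun _ : GridPt H W => μ1 := rfl
  haveI : IsProbabilityMeasure μ1 := PMF.toMeasure.isProbabilityMeasure _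
  set g : Bool → ℝ := fun b => (if b then (1 : ℝ) else 0) / q with hg
  have hqne : q ≠ 0 := ne_of_gt hq0
  have I1 : ∫ b, g b ∂μ1 = 1 := by
    rw [hμ1, bernoulli_integral hq0.le hq1.le]
    simp [hg]
    field_simp
  have I2 : ∫ b, g b * g b ∂μ1 = 1 / q := by
    rw [hμ1, bernoulli_integral hq0.le hq1.le]
    simp [hg]
    field_simp
  have hadj_ne : ∀ x y : GridPt H W, adjZ (gridZ x) (gridZ y) → x ≠ y := by
    intro x y h hyx
    subst hyx
    simp [adjZ, sub_self] at h
  have hpair : ∀ x y : GridPt H W, x ≠ y →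
      (∫ ω : GridPt H W → Bool, (g (ω x) - g (ω y)) ^ 2 ∂(Measure.pi fun _ => μ1))
        = 2 * (1 - q) / q := by
    intro x y hxy
    have expand : (fun ω : GridPt H W → Bool => (g (ω x) - g (ω y)) ^ 2)
        = fun ω : GridPt H W → Bool =>
            ((fun b => g b * g b) (ω x) + (fun b => g b * g b) (ω y))
              - 2 * (g (ω x) * g (ω y)) := by
      funext ω; ring
    rw [expand, integral_sub (Integrable.of_finite) (Integrable.of_finite),
      integral_add (Integrable.of_finite) (Integrable.of_finite),
      integral_const_mul _ _, pi_integral_eval μ1 x (fun b => g b * g b),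
      pi_integral_eval μ1 y (fun b => g b * g b), pi_integral_two μ1 hxy g, I1, I2]
    field_simp
    ring
  have hterm : ∀ x y : GridPt H W,
      (∫ ω : GridPt H W → Bool,
          (if adjZ (gridZ x) (gridZ y) then
            c (gridZ x) (gridZ y) * (maskD q ω x * c₀ - maskD q ω y * c₀) ^ 2 else 0)
          ∂(Measure.pi fun _ => μ1))
        = if adjZ (gridZ x) (gridZ y) then
            c (gridZ x) (gridZ y) * c₀ ^ 2 * (2 * (1 - q) / q) else 0 := by
    intro x y
    by_cases h : adjZ (gridZ x) (gridZ y)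
    · simp only [h, if_true]
      have hfun : (fun ω : GridPt H W → Bool =>
          c (gridZ x) (gridZ y) * (maskD q ω x * c₀ - maskD q ω y * c₀) ^ 2)
          = fun ω : GridPt H W → Bool =>
            (c (gridZ x) (gridZ y) * c₀ ^ 2) * (g (ω x) - g (ω y)) ^ 2 := by
        funext ω
        have h1 : maskD q ω x = g (ω x) := rfl
        have h2 : maskD q ω y = g (ω y) := rfl
        rw [h1, h2]; ring
      rw [hfun, integral_const_mul _ _, hpair x y (hadj_ne x y h)]
    · simp [h]
  have part2 : (∫ ω, Eint c (fun x => maskD q ω x * c₀)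
        ∂(bernoulliPi (GridPt H W) q hq1.le))
      = ((1 - q) / (2 * q)) * c₀ ^ 2 * ∑ x : GridPt H W, dInt c x := by
    rw [hμ]
    simp only [Eint]
    rw [integral_const_mul _ _, integral_finset_sum _ (fun _ _ => Integrable.of_finite)]
    have hsums : ∀ x : GridPt H W,
        (∫ ω : GridPt H W → Bool, ∑ y : GridPt H W,
          (if adjZ (gridZ x) (gridZ y) then
            c (gridZ x) (gridZ y) * (maskD q ω x * c₀ - maskD q ω y * c₀) ^ 2 else 0)
          ∂(Measure.pi fun _ => μ1))
        = ∑ y : GridPt H W, if adjZ (gridZ x) (gridZ y) then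
            c (gridZ x) (gridZ y) * c₀ ^ 2 * (2 * (1 - q) / q) else 0 := by
      intro x
      rw [integral_finset_sum _ (fun _ _ => Integrable.of_finite)]
      exact Finset.sum_congr rfl fun y _ => hterm x y
    rw [Finset.sum_congr rfl fun x _ => hsums x]
    simp only [dInt, Finset.mul_sum]
    refine Finset.sum_congr rfl fun x _ => ?_
    refine Finset.sum_congr rfl fun y _ => ?_
    split_ifs with h
    · field_simp
      ring
    · simp
  have hsumpos : 0 < ∑ x : GridPt H W, dInt c x := by
    obtain ⟨x₀, y₀, hxy⟩ := hedge
    have hnn : ∀ x : GridPt H W, 0 ≤ dInt c x := by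
      intro x
      refine Finset.sum_nonneg fun y _ => ?_
      split_ifs with h
      · exact (hpos _ _ h).le
      · exact le_refl 0
    have hx0 : 0 < dInt c x₀ := by
      refine Finset.sum_pos' (fun y _ => ?_) ⟨y₀, Finset.mem_univ _, ?_⟩
      · split_ifs with h
        · exact (hpos _ _ h).le
        · exact le_refl 0
      · simp only [hxy, if_true]
        exact hpos _ _ hxy
    exact Finset.sum_pos' (fun x _ => hnn x) ⟨x₀, Finset.mem_univ _, hx0⟩
  refine ⟨part1, part2, ?_⟩
  rw [part2]
  have hc2 : 0 < c₀ ^ 2 := lt_of_le_of_ne (sq_nonneg c₀) (Ne.symm (pow_ne_zero 2 hc₀))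
  have hK : 0 < (1 - q) / (2 * q) := div_pos (by linarith) (by linarith)
  exact mul_pos (mul_pos hK hc2) hsumpos

end
end
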